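/- Let H be a 2×2 complex matrix whose columns are unit vectors (|h₁₁|²+|h₂₁|² = 1 and |h₁₂|²+|h₂₂|² = 1), and let F be the nonnegative square root of H*H. Then there exist θ ∈ [0, π/4] and a ∈ ℂ with |a| = 1 such that F = [[cos θ, a·sin θ], [conj(a)·sin θ, cos θ]]. -/

import Mathlib

open Matrix Complex Real ComplexOrder

noncomputable def S (z : ℂ) (G : Matrix (Fin 2) (Fin 2) ℂ) : Matrix (Fin 2) (Fin 2) ℂ :=
  G * Matrix.diagonal ![z, z⁻¹] * Gᴴ

noncomputable def L (n : ℕ) (z : ℂ) (G : Matrix (Fin 2) (Fin 2) ℂ) : ℂ :=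
  ((S z G) ^ n).trace

noncomputable def Fmat (θ : ℝ) : Matrix (Fin 2) (Fin 2) ℂ :=
  !![(Real.cos θ : ℂ), (Real.sin θ : ℂ); (Real.sin θ : ℂ), (Real.cos θ : ℂ)]

theorem stmt6 (H F : Matrix (Fin 2) (Fin 2) ℂ)
    (hc1 : ‖H 0 0‖ ^ 2 + ‖H 1 0‖ ^ 2 = 1)
    (hc2 : ‖H 0 1‖ ^ 2 + ‖H 1 1‖ ^ 2 = 1)
    (hF : F.PosSemidef) (hsq : F ^ 2 = Hᴴ * H) :
    ∃ θ ∈ Set.Icc (0 : ℝ) (Real.pi / 4), ∃ a : ℂ, ‖a‖ = 1 ∧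
      F = !![(Real.cos θ : ℂ), a * (Real.sin θ : ℂ);
             (starRingEnd ℂ a) * (Real.sin θ : ℂ), (Real.cos θ : ℂ)] := by
  have key : ∀ z : ℂ, (starRingEnd ℂ) z * z = ((‖z‖ ^ 2 : ℝ) : ℂ) := by
    intro z
    rw [mul_comm, Complex.mul_conj, Complex.sq_norm]
  set γ : ℂ := (Hᴴ * H) 0 1 with hγdef
  have hγexp : γ = (starRingEnd ℂ) (H 0 0) * H 0 1 + (starRingEnd ℂ) (H 1 0) * H 1 1 := by
    simp [hγdef, Matrix.mul_apply, Fin.sum_univ_two, Matrix.conjTranspose_apply]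
  have h00 : (Hᴴ * H) 0 0 = 1 := by
    simp only [Matrix.mul_apply, Fin.sum_univ_two, Matrix.conjTranspose_apply,
      Complex.star_def]
    rw [key, key, ← Complex.ofReal_add, hc1, Complex.ofReal_one]
  have h11 : (Hᴴ * H) 1 1 = 1 := by
    simp only [Matrix.mul_apply, Fin.sum_univ_two, Matrix.conjTranspose_apply,
      Complex.star_def]
    rw [key, key, ← Complex.ofReal_add, hc2, Complex.ofReal_one]
  have h10 : (Hᴴ * H) 1 0 = (starRingEnd ℂ) γ := by
    have hherm : (Hᴴ * H).IsHermitian := Matrix.isHermitian_conjTranspose_mul_self H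
    have := congrFun (congrFun hherm 1) 0
    simpa [Matrix.conjTranspose_apply, Complex.star_def, hγdef] using this.symm
  -- bound on |γ|
  set r : ℝ := ‖γ‖ with hrdef
  clear_value γ
  have hr0 : 0 ≤ r := norm_nonneg γ
  have hr1 : r ≤ 1 := by
    have htri : r ≤ ‖(starRingEnd ℂ) (H 0 0) * H 0 1‖
        + ‖(starRingEnd ℂ) (H 1 0) * H 1 1‖ := by
      rw [hrdef, hγexp]; exact norm_add_le _ _
    simp only [norm_mul, Complex.norm_conj] at htri
    nlinarith [norm_nonneg (H 0 0), norm_nonneg (H 1 0),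
      norm_nonneg (H 0 1), norm_nonneg (H 1 1),
      sq_nonneg (‖H 0 0‖ - ‖H 0 1‖),
      sq_nonneg (‖H 1 0‖ - ‖H 1 1‖)]
  -- the angle
  set θ : ℝ := Real.arcsin r / 2 with hθdef
  have hθ0 : 0 ≤ θ := by
    have := Real.arcsin_nonneg.2 hr0
    rw [hθdef]; linarith
  have hθ4 : θ ≤ Real.pi / 4 := by
    have := Real.arcsin_le_pi_div_two r
    rw [hθdef]; linarith
  have hpi := Real.pi_pos
  set c : ℝ := Real.cos θ with hcdef
  clear_value r
  set s : ℝ := Real.sin θ with hsdef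
  have hs0 : 0 ≤ s := Real.sin_nonneg_of_nonneg_of_le_pi hθ0 (by linarith)
  have hc0 : 0 ≤ c := Real.cos_nonneg_of_mem_Icc ⟨by linarith, by linarith⟩
  have hcs : s ≤ c := by
    have h1 : Real.cos (θ + Real.pi / 4)
        = c * (Real.sqrt 2 / 2) - s * (Real.sqrt 2 / 2) := by
      rw [hcdef, hsdef, Real.cos_add, Real.cos_pi_div_four, Real.sin_pi_div_four]
    have h2 : (0:ℝ) ≤ Real.cos (θ + Real.pi / 4) :=
      Real.cos_nonneg_of_mem_Icc ⟨by linarith, by linarith⟩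
    have h3 : (0:ℝ) < Real.sqrt 2 := Real.sqrt_pos.2 (by norm_num)
    nlinarith
  have h2sc : 2 * s * c = r := by
    have := Real.sin_two_mul θ
    rw [hθdef] at this
    rw [hsdef, hcdef, ← this]
    rw [show 2 * (Real.arcsin r / 2) = Real.arcsin r by ring]
    exact Real.sin_arcsin (by linarith) hr1
  have hsc1 : s ^ 2 + c ^ 2 = 1 := Real.sin_sq_add_cos_sq θ
  clear_value c s
  -- the phase
  set a : ℂ := if γ = 0 then 1 else γ / (r : ℂ) with hadef
  have ha1 : ‖a‖ = 1 := by
    rw [hadef]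
    split_ifs with h
    · simp
    · have hrne : r ≠ 0 := fun hr => h (norm_eq_zero.1 (hrdef ▸ hr))
      rw [norm_div, Complex.norm_of_nonneg hr0, ← hrdef, div_self hrne]
  have har : a * (r : ℂ) = γ := by
    rw [hadef]
    split_ifs with h
    · simp [h, hrdef]
    · have hrne : (r : ℂ) ≠ 0 := by
        simp only [ne_eq, Complex.ofReal_eq_zero]
        exact fun hr => h (norm_eq_zero.1 (hrdef ▸ hr))
      field_simp
  have haa : a * (starRingEnd ℂ) a = 1 := by
    rw [Complex.mul_conj, Complex.normSq_eq_norm_sq, ha1]; norm_num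
  clear_value a
  -- the candidate matrix
  set G : Matrix (Fin 2) (Fin 2) ℂ :=
    !![(c : ℂ), a * (s : ℂ); (starRingEnd ℂ) a * (s : ℂ), (c : ℂ)] with hGdef
  -- G is PSD
  set p : ℝ := Real.sqrt ((c + s) / 2) with hpdef
  set q : ℝ := Real.sqrt ((c - s) / 2) with hqdef
  have hp2 : ((p : ℂ)) ^ 2 = ((c : ℂ) + (s : ℂ)) / 2 := by
    have h : p ^ 2 = (c + s) / 2 := Real.sq_sqrt (by linarith)
    rw [← Complex.ofReal_pow, h]; push_cast; ring
  have hq2 : ((q : ℂ)) ^ 2 = ((c : ℂ) - (s : ℂ)) / 2 := by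
    have h : q ^ 2 = (c - s) / 2 := Real.sq_sqrt (by linarith)
    rw [← Complex.ofReal_pow, h]; push_cast; ring
  clear_value G p q
  set B : Matrix (Fin 2) (Fin 2) ℂ :=
    !![(p : ℂ) * (starRingEnd ℂ) a, (p : ℂ); (q : ℂ) * (starRingEnd ℂ) a, -(q : ℂ)] with hBdef
  clear_value B
  have hGB : G = Bᴴ * B := by
    ext i j
    fin_cases i <;> fin_cases j <;>
      simp [hGdef, hBdef, Matrix.mul_apply, Fin.sum_univ_two,
        Matrix.conjTranspose_apply, Complex.star_def]
    · linear_combination (-(a * (starRingEnd ℂ) a)) * hp2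
        + (-(a * (starRingEnd ℂ) a)) * hq2 + (-(c : ℂ)) * haa
    · linear_combination (-a) * hp2 + a * hq2
    · linear_combination (-(starRingEnd ℂ) a) * hp2 + (starRingEnd ℂ) a * hq2
    · linear_combination -hp2 - hq2
  have hGpsd : G.PosSemidef := hGB ▸ Matrix.posSemidef_conjTranspose_mul_self B
  have hHH : Hᴴ * H = !![1, γ; (starRingEnd ℂ) γ, 1] := by
    rw [Matrix.eta_fin_two (Hᴴ * H), h00, h11, h10, ← hγdef]
  have hsc1C : ((s : ℂ)) ^ 2 + ((c : ℂ)) ^ 2 = 1 := by exact_mod_cast hsc1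
  have hγr : a * ((2 : ℂ) * (s : ℂ) * (c : ℂ)) = γ := by
    rw [show ((2:ℂ) * (s:ℂ) * (c:ℂ)) = ((2 * s * c : ℝ) : ℂ) by push_cast; ring, h2sc, har]
  have hγr' : (starRingEnd ℂ) a * ((2 : ℂ) * (s : ℂ) * (c : ℂ)) = (starRingEnd ℂ) γ := by
    have := congrArg (starRingEnd ℂ) hγr
    simpa [_root_.map_mul, Complex.conj_ofReal, map_ofNat] using this
  have hG2 : G ^ 2 = Hᴴ * H := by
    rw [pow_two, hGdef, Matrix.mul_fin_two, hHH]
    ext i j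
    fin_cases i <;> fin_cases j <;> simp
    · linear_combination ((s : ℂ)) ^ 2 * haa + hsc1C
    · linear_combination hγr
    · linear_combination hγr'
    · linear_combination ((s : ℂ)) ^ 2 * haa + hsc1C
  have hFG : F = G := open MatrixOrder in (CFC.sq_eq_sq_iff F G hF.nonneg hGpsd.nonneg).1 (by rw [hsq, hG2])
  exact ⟨θ, ⟨hθ0, hθ4⟩, a, ha1, by rw [hFG, hGdef, hcdef, hsdef]⟩
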